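/- For every β ≥ 1, every h, w > 0, and every ε > 0, there exists a set t ⊆ [0,w]×[0,h] that is a finite union of axis-aligned rectangles, is downward closed (whenever (x,y) ∈ t, the rectangle [0,x]×[0,y] is contained in t), has positive area, such that every axis-aligned rectangle contained in t has area less than area(t)/β, and area(t) > (β/e^{β−1})·h·w − ε. -/

import Mathlib

open MeasureTheory

lemma staircase_vol_rect (a b c d : ℝ) :
    volume (Set.Icc a b ×ˢ Set.Icc c d) = ENNReal.ofReal (b - a) * ENNReal.ofReal (d - c) := by
  rw [MeasureTheory.Measure.volume_eq_prod, MeasureTheory.Measure.prod_prod,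
    Real.volume_Icc, Real.volume_Icc]

lemma staircase_find (w q : ℝ) (m : ℕ) :
    ∀ i, i ≤ m → ∀ u : ℝ, 0 ≤ u → u ≤ w * q ^ (m - i) →
      ∃ j, j ≤ i ∧ u ≤ w * q ^ (m - j) ∧ (j = 0 ∨ w * q ^ (m - j + 1) ≤ u) := by
  intro i
  induction i with
  | zero => intro _ u hu hle; exact ⟨0, le_rfl, hle, Or.inl rfl⟩
  | succ i ih =>
    intro hi u hu hle
    by_cases hc : u ≤ w * q ^ (m - i)
    · obtain ⟨j, hj1, hj2, hj3⟩ := ih (Nat.le_of_succ_le hi) u hu hc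
      exact ⟨j, hj1.trans (Nat.le_succ i), hj2, hj3⟩
    · refine ⟨i + 1, le_rfl, hle, Or.inr ?_⟩
      have he : m - (i + 1) + 1 = m - i := by omega
      rw [he]
      exact (not_le.1 hc).le

set_option maxHeartbeats 1000000 in
theorem stmt5 (β h w ε : ℝ) (hβ : 1 ≤ β) (hh : 0 < h) (hw : 0 < w) (hε : 0 < ε) :
    ∃ (m : ℕ) (a b c d : Fin m → ℝ) (t : Set (ℝ × ℝ)),
      t = (⋃ i, Set.Icc (a i) (b i) ×ˢ Set.Icc (c i) (d i)) ∧
      (∀ i, a i ≤ b i ∧ c i ≤ d i) ∧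
      t ⊆ Set.Icc (0:ℝ) w ×ˢ Set.Icc (0:ℝ) h ∧
      (∀ p ∈ t, Set.Icc (0:ℝ) p.1 ×ˢ Set.Icc (0:ℝ) p.2 ⊆ t) ∧
      0 < (volume t).toReal ∧
      (∀ a' b' c' d' : ℝ, a' ≤ b' → c' ≤ d' →
        Set.Icc a' b' ×ˢ Set.Icc c' d' ⊆ t →
        (b' - a') * (d' - c') < (volume t).toReal / β) ∧
      β / Real.exp (β - 1) * (h * w) - ε < (volume t).toReal := by
  have hβ0 : 0 < β := lt_of_lt_of_le one_pos hβ
  have hex_s : ∃ s : ℝ, s = min 1 (ε / (4 * h * w * β)) := ⟨_, rfl⟩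
  obtain ⟨s, hs_def⟩ := hex_s
  have hs0 : 0 < s := hs_def ▸ lt_min one_pos (by positivity)
  have hs1 : s ≤ 1 := hs_def ▸ min_le_left _ _
  have hsε : s ≤ ε / (4 * h * w * β) := hs_def ▸ min_le_right _ _
  have hex_a : ∃ a : ℝ, a = β - 1 + s := ⟨_, rfl⟩
  obtain ⟨a, ha_def⟩ := hex_a
  have ha0 : 0 < a := by simp only [ha_def]; linarith
  have haβ : a ≤ β := by simp only [ha_def]; linarith
  obtain ⟨m, hm⟩ := exists_nat_gt (max (β ^ 2 / s) (4 * h * w * β ^ 2 / ε))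
  have hm1 : β ^ 2 / s < m := lt_of_le_of_lt (le_max_left _ _) hm
  have hm2 : 4 * h * w * β ^ 2 / ε < m := lt_of_le_of_lt (le_max_right _ _) hm
  have hm0 : 0 < (m : ℝ) := lt_trans (by positivity) hm1
  have hmn : (m : ℝ) ≠ 0 := ne_of_gt hm0
  have hex_q : ∃ q : ℝ, q = Real.exp (-(a / m)) := ⟨_, rfl⟩
  obtain ⟨q, hq_def⟩ := hex_q
  have hq0 : 0 < q := hq_def ▸ Real.exp_pos _
  have hq1 : q < 1 := by
    rw [hq_def, Real.exp_lt_one_iff]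
    have : 0 < a / m := by positivity
    linarith
  have hqm : q ^ m = Real.exp (-a) := by
    rw [hq_def, ← Real.exp_nat_mul]
    congr 1
    field_simp
  -- the strips
  have hex_A : ∃ A : Fin (m + 1) → ℝ, A = fun i => if i.val = 0 then 0 else w * q ^ (m - i.val + 1) := ⟨_, rfl⟩
  obtain ⟨A, hA_def⟩ := hex_A
  have hex_B : ∃ B : Fin (m + 1) → ℝ, B = fun i => w * q ^ (m - i.val) := ⟨_, rfl⟩
  obtain ⟨B, hB_def⟩ := hex_B
  have hex_D : ∃ D : Fin (m + 1) → ℝ, D = fun i => h * q ^ (i.val) := ⟨_, rfl⟩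
  obtain ⟨D, hD_def⟩ := hex_D
  have hex_S : ∃ S : Fin (m + 1) → Set (ℝ × ℝ), S = fun i => Set.Icc (A i) (B i) ×ˢ Set.Icc 0 (D i) := ⟨_, rfl⟩
  obtain ⟨S, hS_def⟩ := hex_S
  have hA0 : ∀ i, 0 ≤ A i := by
    intro i; simp only [hA_def]
    split <;> positivity
  have hAB : ∀ i, A i ≤ B i := by
    intro i
    simp only [hA_def, hB_def]
    split
    · positivity
    · exact mul_le_mul_of_nonneg_left
        (pow_le_pow_of_le_one hq0.le hq1.le (Nat.le_succ _)) hw.le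
  have hBw : ∀ i, B i ≤ w := by
    intro i
    simp only [hB_def]
    calc w * q ^ (m - i.val) ≤ w * 1 :=
          mul_le_mul_of_nonneg_left (pow_le_one₀ hq0.le hq1.le) hw.le
      _ = w := mul_one w
  have hD0 : ∀ i, (0:ℝ) ≤ D i := by intro i; simp only [hD_def]; positivity
  have hDh : ∀ i, D i ≤ h := by
    intro i; simp only [hD_def]
    calc h * q ^ i.val ≤ h * 1 :=
          mul_le_mul_of_nonneg_left (pow_le_one₀ hq0.le hq1.le) hh.le
      _ = h := mul_one h
  -- volume of each strip
  have hterm0 : ∀ i, 0 ≤ (B i - A i) * D i := fun i =>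
    mul_nonneg (sub_nonneg.2 (hAB i)) (hD0 i)
  have hSvol : ∀ i, volume (S i) = ENNReal.ofReal ((B i - A i) * D i) := by
    intro i
    rw [hS_def]
    rw [staircase_vol_rect, sub_zero, ← ENNReal.ofReal_mul (sub_nonneg.2 (hAB i))]
  -- pairwise a.e. disjoint
  have hdisj_lt : ∀ i j : Fin (m + 1), i < j → volume (S i ∩ S j) = 0 := by
    intro i j hij
    have hj0 : j.val ≠ 0 := by
      have := Fin.lt_iff_val_lt_val.1 hij; omega
    have hBA : B i ≤ A j := by
      simp only [hA_def, hB_def, if_neg hj0]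
      have hexp : m - j.val + 1 ≤ m - i.val := by
        have h1 := Fin.lt_iff_val_lt_val.1 hij
        have h2 := j.isLt
        omega
      exact mul_le_mul_of_nonneg_left (pow_le_pow_of_le_one hq0.le hq1.le hexp) hw.le
    have hsub : S i ∩ S j ⊆ Set.Icc (A j) (B i) ×ˢ Set.Icc 0 (D i) := by
      simp only [hS_def]
      rintro ⟨x, y⟩ ⟨⟨hx1, hy1⟩, ⟨hx2, hy2⟩⟩
      exact ⟨⟨hx2.1, hx1.2⟩, hy1⟩
    refine le_antisymm ?_ (zero_le)
    calc volume (S i ∩ S j) ≤ volume (Set.Icc (A j) (B i) ×ˢ Set.Icc 0 (D i)) :=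
          measure_mono hsub
      _ = ENNReal.ofReal (B i - A j) * ENNReal.ofReal (D i - 0) := staircase_vol_rect _ _ _ _
      _ = 0 := by
          rw [ENNReal.ofReal_eq_zero.2 (by linarith)]
          simp
  have hdisj : Pairwise (Function.onFun (AEDisjoint volume) S) := by
    intro i j hij
    rcases lt_or_gt_of_ne hij with hlt | hgt
    · exact hdisj_lt i j hlt
    · have := hdisj_lt j i hgt
      rwa [Set.inter_comm] at this
  -- total volume
  have hex_V : ∃ V : ℝ, V = w * h * q ^ m * (1 + m * (1 - q)) := ⟨_, rfl⟩
  obtain ⟨V, hV_def⟩ := hex_V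
  have hqmpos : 0 < q ^ m := pow_pos hq0 m
  have hfac0 : (0:ℝ) < 1 + m * (1 - q) := by
    have h1 : (0:ℝ) ≤ (m : ℝ) * (1 - q) := mul_nonneg hm0.le (by linarith)
    linarith
  have hV0 : 0 < V := by
    rw [hV_def]
    exact mul_pos (mul_pos (mul_pos hw hh) hqmpos) hfac0
  have hsum : ∑ i : Fin (m + 1), (B i - A i) * D i = V := by
    rw [Fin.sum_univ_succ]
    have h0 : (B 0 - A 0) * D 0 = w * h * q ^ m := by
      simp only [hA_def, hB_def, hD_def]
      norm_num
      ring
    have hstep : ∀ i : Fin m, (B i.succ - A i.succ) * D i.succ = w * h * (q ^ m - q ^ m * q) := by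
      intro i
      have hk : i.val + 1 ≤ m := i.isLt
      have hne : (i.succ : Fin (m + 1)).val ≠ 0 := by simp [Fin.val_succ]
      simp only [hA_def, hB_def, hD_def, if_neg hne, Fin.val_succ]
      have e1 : q ^ (m - (i.val + 1)) * q ^ (i.val + 1) = q ^ m := by
        rw [← pow_add, Nat.sub_add_cancel hk]
      rw [pow_succ (n := m - (i.val + 1))]
      linear_combination (w * h - w * h * q) * e1
    rw [h0, Finset.sum_congr rfl (fun i _ => hstep i), Finset.sum_const, Finset.card_univ,
      Fintype.card_fin, nsmul_eq_mul, hV_def]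
    ring
  have hVol : volume (⋃ i, S i) = ENNReal.ofReal V := by
    rw [measure_iUnion₀ hdisj (fun i => by
      rw [hS_def]
      exact (measurableSet_Icc.prod measurableSet_Icc).nullMeasurableSet)]
    rw [tsum_fintype, ← hsum, ENNReal.ofReal_sum_of_nonneg (fun i _ => hterm0 i)]
    exact Finset.sum_congr rfl fun i _ => hSvol i
  have hVolR : (volume (⋃ i, S i)).toReal = V := by
    rw [hVol, ENNReal.toReal_ofReal hV0.le]
  -- key analytic inequality: a - a^2/m ≤ m (1 - q), and β - 1 < m (1 - q)
  have e1 : a / m + 1 ≤ Real.exp (a / m) := Real.add_one_le_exp _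
  have e2 : 1 - a / m ≤ q := by
    rw [hq_def]
    have := Real.add_one_le_exp (-(a / m))
    linarith
  have e3 : Real.exp (a / m) * q = 1 := by
    rw [hq_def, ← Real.exp_add]
    simp
  have e4 : a * q ≤ m * (1 - q) := by
    have h6 : q * a / m ≤ 1 - q := by
      have h5 : q * (a / m + 1) ≤ q * Real.exp (a / m) :=
        mul_le_mul_of_nonneg_left e1 hq0.le
      have h5' : q * Real.exp (a / m) = 1 := by rw [mul_comm]; exact e3
      have h5'' : q * (a / m + 1) = q * a / m + q := by ring
      linarith
    have h7 := mul_le_mul_of_nonneg_left h6 hm0.le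
    have h8 : (m : ℝ) * (q * a / m) = a * q := by field_simp
    have h8' : (m : ℝ) * (1 - q) = m * (1 - q) := rfl
    linarith
  have e5 : a - a ^ 2 / m ≤ a * q := by
    have h9 := mul_le_mul_of_nonneg_left e2 ha0.le
    have heq : a * (1 - a / m) = a - a ^ 2 / m := by field_simp
    linarith
  have hmono : a - a ^ 2 / m ≤ m * (1 - q) := le_trans e5 e4
  have ha2 : a ^ 2 ≤ β ^ 2 := by
    have := mul_le_mul haβ haβ ha0.le (le_trans ha0.le haβ)
    calc a ^ 2 = a * a := sq a
      _ ≤ β * β := this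
      _ = β ^ 2 := (sq β).symm
  have e6 : a ^ 2 / m < s := by
    have hb : β ^ 2 < (m : ℝ) * s := (div_lt_iff₀ hs0).1 hm1
    rw [div_lt_iff₀ hm0]
    linarith
  have hkey : β - 1 < m * (1 - q) := by
    have : β - 1 = a - s := by rw [ha_def]; ring
    linarith
  refine ⟨m + 1, A, B, (fun _ => 0), D, ⋃ i, S i, by rw [hS_def], fun i => ⟨hAB i, hD0 i⟩, ?_, ?_, ?_, ?_, ?_⟩
  · -- subset of box
    rintro ⟨x, y⟩ hp
    obtain ⟨i, hi⟩ := Set.mem_iUnion.1 hp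
    rw [hS_def] at hi
    obtain ⟨⟨hx1, hx2⟩, ⟨hy1, hy2⟩⟩ := hi
    exact ⟨⟨le_trans (hA0 i) hx1, le_trans hx2 (hBw i)⟩, ⟨hy1, le_trans hy2 (hDh i)⟩⟩
  · -- downward closed
    rintro ⟨x, y⟩ hp ⟨u, v⟩ ⟨⟨hu0, hux⟩, ⟨hv0, hvy⟩⟩
    obtain ⟨i, hi⟩ := Set.mem_iUnion.1 hp
    rw [hS_def] at hi
    obtain ⟨⟨hx1, hx2⟩, ⟨hy1, hy2⟩⟩ := hi
    have hiLe : i.val ≤ m := Nat.lt_succ_iff.1 i.isLt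
    simp only [hB_def] at hx2
    simp only [hD_def] at hy2
    have huB : u ≤ w * q ^ (m - i.val) := le_trans hux hx2
    obtain ⟨j, hj1, hj2, hj3⟩ := staircase_find w q m i.val hiLe u hu0 huB
    rw [hS_def]
    refine Set.mem_iUnion.2 ⟨⟨j, by omega⟩, ⟨⟨?_, by simp only [hB_def]; exact hj2⟩, ⟨hv0, ?_⟩⟩⟩
    · simp only [hA_def]
      by_cases hj0 : j = 0
      · rw [if_pos hj0]; exact hu0
      · rw [if_neg hj0]
        rcases hj3 with hj3 | hj3
        · exact absurd hj3 hj0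
        · exact hj3
    · simp only [hD_def]
      have hpw : q ^ i.val ≤ q ^ j := pow_le_pow_of_le_one hq0.le hq1.le hj1
      have hvD : v ≤ h * q ^ i.val := le_trans hvy hy2
      have : h * q ^ i.val ≤ h * q ^ j := mul_le_mul_of_nonneg_left hpw hh.le
      linarith
  · -- positive volume
    rw [hVolR]; exact hV0
  · -- rectangle condition
    intro a' b' c' d' hab hcd hsub
    rw [hVolR]
    have hbd : ((b', d') : ℝ × ℝ) ∈ ⋃ i, S i :=
      hsub ⟨Set.mem_Icc.2 ⟨hab, le_rfl⟩, Set.mem_Icc.2 ⟨hcd, le_rfl⟩⟩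
    obtain ⟨i, hi⟩ := Set.mem_iUnion.1 hbd
    rw [hS_def] at hi
    obtain ⟨⟨hb1, hb2⟩, ⟨hd1, hd2⟩⟩ := hi
    have hac : ((a', c') : ℝ × ℝ) ∈ ⋃ i, S i :=
      hsub ⟨Set.mem_Icc.2 ⟨le_rfl, hab⟩, Set.mem_Icc.2 ⟨le_rfl, hcd⟩⟩
    obtain ⟨i', hi'⟩ := Set.mem_iUnion.1 hac
    rw [hS_def] at hi'
    have ha'0 : 0 ≤ a' := le_trans (hA0 i') hi'.1.1
    have hc'0 : 0 ≤ c' := hi'.2.1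
    have hBD : B i * D i = w * h * q ^ m := by
      simp only [hB_def, hD_def]
      rw [show w * q ^ (m - i.val) * (h * q ^ i.val)
            = w * h * (q ^ (m - i.val) * q ^ i.val) by ring,
        ← pow_add, Nat.sub_add_cancel (Nat.lt_succ_iff.1 i.isLt)]
    have hb'0 : 0 ≤ b' := le_trans ha'0 hab
    have step1 : (b' - a') * (d' - c') ≤ b' * d' :=
      mul_le_mul (by linarith) (by linarith) (by linarith) hb'0
    have step2 : b' * d' ≤ B i * D i :=
      mul_le_mul hb2 hd2 hd1 (le_trans hb'0 hb2)
    have step3 : w * h * q ^ m < V / β := by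
      rw [lt_div_iff₀ hβ0, hV_def]
      have hwq : 0 < w * h * q ^ m := mul_pos (mul_pos hw hh) hqmpos
      have hlt : β < 1 + m * (1 - q) := by linarith
      have := mul_lt_mul_of_pos_left hlt hwq
      linarith
    calc (b' - a') * (d' - c') ≤ b' * d' := step1
      _ ≤ B i * D i := step2
      _ = w * h * q ^ m := hBD
      _ < V / β := step3
  · -- final lower bound
    rw [hVolR]
    have hqmV : V = w * h * Real.exp (-a) * (1 + m * (1 - q)) := by rw [hV_def, hqm]
    have hwh0 : (0:ℝ) < w * h * Real.exp (-a) := by positivity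
    have stepA : w * h * Real.exp (-a) * (1 + (a - a ^ 2 / m)) ≤ V := by
      rw [hqmV]
      exact mul_le_mul_of_nonneg_left (by linarith) hwh0.le
    have hsplit : Real.exp (-a) = Real.exp (1 - β) * Real.exp (-s) := by
      rw [← Real.exp_add]; congr 1; rw [ha_def]; ring
    have hes : 1 - s ≤ Real.exp (-s) := by
      have := Real.add_one_le_exp (-s); linarith
    have hea1 : Real.exp (-a) ≤ 1 :=
      (Real.exp_le_exp.2 (by linarith : -a ≤ 0)).trans_eq Real.exp_zero
    have heb1 : Real.exp (1 - β) ≤ 1 :=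
      (Real.exp_le_exp.2 (by linarith : 1 - β ≤ 0)).trans_eq Real.exp_zero
    have heb0 : 0 < Real.exp (1 - β) := Real.exp_pos _
    have h1a : (0:ℝ) < 1 + a := by linarith
    have t2 : Real.exp (1 - β) * (1 - s) ≤ Real.exp (-a) := by
      rw [hsplit]
      exact mul_le_mul_of_nonneg_left hes heb0.le
    have stepB : w * h * (Real.exp (1 - β) * (1 - s)) * (1 + a) ≤
        w * h * Real.exp (-a) * (1 + a) := by
      have h10 : w * h * (Real.exp (1 - β) * (1 - s)) ≤ w * h * Real.exp (-a) :=
        mul_le_mul_of_nonneg_left t2 (by positivity)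
      exact mul_le_mul_of_nonneg_right h10 h1a.le
    have hconn : (1 - s) * (1 + a) = β - s * a := by rw [ha_def]; ring
    have hconn2 : w * h * (Real.exp (1 - β) * (1 - s)) * (1 + a)
        = w * h * Real.exp (1 - β) * β - w * h * Real.exp (1 - β) * (s * a) := by
      linear_combination (w * h * Real.exp (1 - β)) * hconn
    have hsa0 : (0:ℝ) ≤ s * a := mul_nonneg hs0.le ha0.le
    have t1 : w * h * Real.exp (1 - β) * (s * a) ≤ w * h * (s * a) := by
      have h12 : Real.exp (1 - β) * (s * a) ≤ s * a := mul_le_of_le_one_left hsa0 heb1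
      calc w * h * Real.exp (1 - β) * (s * a) = w * h * (Real.exp (1 - β) * (s * a)) := by ring
        _ ≤ w * h * (s * a) := mul_le_mul_of_nonneg_left h12 (by positivity)
    have herr1 : w * h * (s * a) ≤ ε / 4 := by
      have h4 : (0:ℝ) < 4 * h * w * β := by positivity
      have h11 : s * (4 * h * w * β) ≤ ε := (le_div_iff₀ h4).1 hsε
      have h13 : w * h * (s * a) ≤ w * h * (s * β) :=
        mul_le_mul_of_nonneg_left (mul_le_mul_of_nonneg_left haβ hs0.le) (by positivity)
      have h14 : w * h * (s * β) = s * (4 * h * w * β) / 4 := by ring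
      linarith
    have herr2 : w * h * Real.exp (-a) * (a ^ 2 / m) < ε / 4 := by
      have hb2 : 4 * h * w * β ^ 2 < (m : ℝ) * ε := by
        rw [div_lt_iff₀ hε] at hm2; linarith
      have hXa : Real.exp (-a) * a ^ 2 ≤ β ^ 2 :=
        le_trans (mul_le_of_le_one_left (sq_nonneg a) hea1) ha2
      calc w * h * Real.exp (-a) * (a ^ 2 / m)
          = w * h * (Real.exp (-a) * a ^ 2) / m := by ring
        _ ≤ w * h * β ^ 2 / m := by
            gcongr
        _ < ε / 4 := by
            rw [div_lt_iff₀ hm0]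
            have h15 : w * h * β ^ 2 = (4 * h * w * β ^ 2) / 4 := by ring
            have h16 : ε / 4 * (m : ℝ) = (m : ℝ) * ε / 4 := by ring
            linarith
    have hring1 : w * h * Real.exp (-a) * (1 + (a - a ^ 2 / m))
        = w * h * Real.exp (-a) * (1 + a) - w * h * Real.exp (-a) * (a ^ 2 / m) := by ring
    have c1 : w * h * Real.exp (-a) * (1 + a) - w * h * Real.exp (-a) * (a ^ 2 / m) ≤ V := by
      rw [← hring1]; exact stepA
    have c2 : w * h * Real.exp (1 - β) * β - w * h * Real.exp (1 - β) * (s * a) ≤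
        w * h * Real.exp (-a) * (1 + a) := by
      rw [← hconn2]; exact stepB
    have hdivexp : β / Real.exp (β - 1) = β * Real.exp (1 - β) := by
      rw [div_eq_iff (Real.exp_pos (β - 1)).ne', mul_assoc, ← Real.exp_add]
      norm_num
    rw [hdivexp]
    have hEq : β * Real.exp (1 - β) * (h * w) = w * h * Real.exp (1 - β) * β := by ring
    linarith
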